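/- For all p > 0, μ ∈ ℝ and y ∈ ℝ, the second partial derivative of E in y exists and is given by ∂²E/∂y²(y,p,μ) = −1/p + (1/(2·K(y,p,μ)²))·Σ_{n₁,n₂ ≥ 0} (υ^{n₁+n₂}/(n₁!·n₂!))·(n₁−n₂)²·exp((y+μ)(n₁+n₂) − (a p/2)(n₁² + n₂²)), the double series being convergent. -/

import Mathlib

open Real

set_option maxHeartbeats 1000000

/-- The single-cell partition function `K(y,p,μ)` with cell volume `υ` and ratio `a`. -/
noncomputable def K (υ a y p μ : ℝ) : ℝ :=
  ∑' n : ℕ, (υ ^ n / (Nat.factorial n : ℝ)) *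
    Real.exp ((y + μ) * n - (a * p / 2) * (n : ℝ) ^ 2)

/-- The function `E(y,p,μ) = -y²/(2p) + ln K(y,p,μ)`. -/
noncomputable def E (υ a y p μ : ℝ) : ℝ :=
  -(y ^ 2) / (2 * p) + Real.log (K υ a y p μ)

/-- The `n`-th term of the series defining `K`, as a function of `y`. -/
noncomputable def uu (υ a p μ : ℝ) (n : ℕ) (x : ℝ) : ℝ :=
  (υ ^ n / (Nat.factorial n : ℝ)) * Real.exp ((x + μ) * n - (a * p / 2) * (n : ℝ) ^ 2)

/-- First-derivative series of `K`. -/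
noncomputable def K1 (υ a p μ : ℝ) (x : ℝ) : ℝ := ∑' n : ℕ, (n : ℝ) * uu υ a p μ n x

/-- Second-derivative series of `K`. -/
noncomputable def K2 (υ a p μ : ℝ) (x : ℝ) : ℝ := ∑' n : ℕ, (n : ℝ) ^ 2 * uu υ a p μ n x

lemma uu_nonneg {υ : ℝ} (hυ : 0 < υ) (a p μ : ℝ) (n : ℕ) (x : ℝ) : 0 ≤ uu υ a p μ n x :=
  mul_nonneg (div_nonneg (pow_nonneg hυ.le n) (Nat.cast_nonneg _)) (Real.exp_pos _).le

lemma uu_pos {υ : ℝ} (hυ : 0 < υ) (a p μ : ℝ) (n : ℕ) (x : ℝ) : 0 < uu υ a p μ n x :=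
  mul_pos (div_pos (pow_pos hυ n) (by exact_mod_cast Nat.factorial_pos n)) (Real.exp_pos _)

lemma summable_poly {υ : ℝ} (hυ : 0 < υ) (k : ℕ) (b c : ℝ) (hc : 0 < c) :
    Summable (fun n : ℕ => (n : ℝ) ^ k * ((υ ^ n / (Nat.factorial n : ℝ)) *
      Real.exp (b * n - c * (n : ℝ) ^ 2))) := by
  set M : ℝ := k + |b| + |Real.log υ| + 1 with hM
  apply summable_of_isBigO_nat Real.summable_exp_neg_nat
  rw [Asymptotics.isBigO_iff]
  refine ⟨1, ?_⟩
  rw [Filter.eventually_atTop]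
  refine ⟨⌈M / c⌉₊, fun n hn => ?_⟩
  have hn' : M ≤ c * n := by
    rw [← div_le_iff₀' hc]
    exact (Nat.le_ceil _).trans (by exact_mod_cast hn)
  have h0 : (0:ℝ) ≤ n := Nat.cast_nonneg n
  have h1 : (n:ℝ) ^ k * ((υ ^ n / (Nat.factorial n : ℝ)) * Real.exp (b * n - c * (n : ℝ) ^ 2))
      ≤ Real.exp ((k : ℝ) * n) * (Real.exp (Real.log υ * n) * Real.exp (b * n - c * (n:ℝ)^2)) := by
    have e1 : (n:ℝ) ^ k ≤ Real.exp ((k:ℝ) * n) := by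
      calc (n:ℝ) ^ k ≤ (Real.exp n) ^ k := by
            gcongr; exact (Real.add_one_le_exp (n:ℝ)).trans' (by linarith)
        _ = Real.exp ((k:ℝ) * n) := by rw [← Real.exp_nat_mul, mul_comm]
    have e2 : υ ^ n / (Nat.factorial n : ℝ) ≤ Real.exp (Real.log υ * n) := by
      calc υ ^ n / (Nat.factorial n : ℝ) ≤ υ ^ n / 1 := by
            gcongr
            exact_mod_cast Nat.one_le_iff_ne_zero.mpr (Nat.factorial_ne_zero n)
        _ = υ ^ n := div_one _
        _ = Real.exp (Real.log υ * n) := by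
            rw [mul_comm, Real.exp_nat_mul, Real.exp_log hυ]
    exact mul_le_mul e1 (mul_le_mul_of_nonneg_right e2 (Real.exp_pos _).le)
      (by positivity) (Real.exp_pos _).le
  have h2 : Real.exp ((k : ℝ) * n) * (Real.exp (Real.log υ * n) * Real.exp (b * n - c * (n:ℝ)^2))
      ≤ Real.exp (-(n:ℝ)) := by
    rw [← Real.exp_add, ← Real.exp_add, Real.exp_le_exp]
    nlinarith [le_abs_self b, le_abs_self (Real.log υ), abs_nonneg b, abs_nonneg (Real.log υ),
      mul_le_mul_of_nonneg_left hn' h0]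
  have hnn : 0 ≤ (n:ℝ) ^ k * ((υ ^ n / (Nat.factorial n : ℝ)) *
      Real.exp (b * n - c * (n : ℝ) ^ 2)) := by positivity
  rw [Real.norm_eq_abs, Real.norm_eq_abs, abs_of_nonneg hnn, abs_of_nonneg (Real.exp_pos _).le,
    one_mul]
  exact h1.trans h2

lemma summable_uu_pow {υ a p μ : ℝ} (hυ : 0 < υ) (hc : 0 < a * p / 2) (k : ℕ) (x : ℝ) :
    Summable (fun n : ℕ => (n : ℝ) ^ k * uu υ a p μ n x) :=
  summable_poly hυ k (x + μ) (a * p / 2) hc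

lemma summable_uu {υ a p μ : ℝ} (hυ : 0 < υ) (hc : 0 < a * p / 2) (x : ℝ) :
    Summable (fun n : ℕ => uu υ a p μ n x) := by
  simpa using summable_uu_pow hυ hc 0 x

lemma hasDerivAt_uu (υ a p μ : ℝ) (n : ℕ) (x : ℝ) :
    HasDerivAt (fun z => uu υ a p μ n z) ((n : ℝ) * uu υ a p μ n x) x := by
  have h : HasDerivAt (fun z : ℝ => (z + μ) * n - (a * p / 2) * (n : ℝ) ^ 2) (n : ℝ) x := by
    simpa using (((hasDerivAt_id x).add_const μ).mul_const (n : ℝ)).sub_const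
      ((a * p / 2) * (n : ℝ) ^ 2)
  have h2 := h.exp.const_mul (υ ^ n / (Nat.factorial n : ℝ))
  refine h2.congr_deriv ?_
  unfold uu; ring

lemma K_eq (υ a p μ x : ℝ) : K υ a x p μ = ∑' n : ℕ, uu υ a p μ n x := rfl

lemma K_pos {υ a p μ : ℝ} (hυ : 0 < υ) (hc : 0 < a * p / 2) (x : ℝ) :
    0 < K υ a x p μ := by
  rw [K_eq]
  exact Summable.tsum_pos (summable_uu hυ hc x) (fun n => uu_nonneg hυ a p μ n x) 0 (uu_pos hυ a p μ 0 x)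

lemma hasDerivAt_K {υ a p μ : ℝ} (hυ : 0 < υ) (hc : 0 < a * p / 2) (x : ℝ) :
    HasDerivAt (fun z => K υ a z p μ) (K1 υ a p μ x) x := by
  set B : ℝ := |x| + |μ| + 1 with hB
  have H := hasDerivAt_tsum_of_isPreconnected
    (u := fun n : ℕ => (n : ℝ) ^ 1 * ((υ ^ n / (Nat.factorial n : ℝ)) *
      Real.exp (B * n - (a * p / 2) * (n : ℝ) ^ 2)))
    (g := fun n z => uu υ a p μ n z) (g' := fun n z => (n : ℝ) * uu υ a p μ n z)
    (t := Metric.ball x 1) (y₀ := x) (y := x)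
    (summable_poly hυ 1 B (a * p / 2) hc) Metric.isOpen_ball
    (convex_ball x 1).isPreconnected
    (fun n z _ => hasDerivAt_uu υ a p μ n z)
    (fun n z hz => by
      rw [Real.norm_eq_abs, abs_of_nonneg (mul_nonneg (Nat.cast_nonneg n)
        (uu_nonneg hυ a p μ n z))]
      have hz1 : |z - x| < 1 := by rw [← Real.dist_eq]; exact Metric.mem_ball.mp hz
      have hz' : z + μ ≤ B := by
        have h1 := abs_lt.mp hz1
        have := le_abs_self x; have := le_abs_self μ
        rw [hB]; linarith [h1.2]
      simp only [pow_one, uu]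
      gcongr)
    (Metric.mem_ball_self one_pos) (summable_uu hυ hc x) (Metric.mem_ball_self one_pos)
  exact H

lemma hasDerivAt_K1 {υ a p μ : ℝ} (hυ : 0 < υ) (hc : 0 < a * p / 2) (x : ℝ) :
    HasDerivAt (fun z => K1 υ a p μ z) (K2 υ a p μ x) x := by
  set B : ℝ := |x| + |μ| + 1 with hB
  have H := hasDerivAt_tsum_of_isPreconnected
    (u := fun n : ℕ => (n : ℝ) ^ 2 * ((υ ^ n / (Nat.factorial n : ℝ)) *
      Real.exp (B * n - (a * p / 2) * (n : ℝ) ^ 2)))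
    (g := fun n z => (n : ℝ) * uu υ a p μ n z)
    (g' := fun n z => (n : ℝ) ^ 2 * uu υ a p μ n z)
    (t := Metric.ball x 1) (y₀ := x) (y := x)
    (summable_poly hυ 2 B (a * p / 2) hc) Metric.isOpen_ball
    (convex_ball x 1).isPreconnected
    (fun n z _ => by
      have := (hasDerivAt_uu υ a p μ n z).const_mul (n : ℝ)
      refine this.congr_deriv ?_
      ring)
    (fun n z hz => by
      rw [Real.norm_eq_abs, abs_of_nonneg (mul_nonneg (by positivity)
        (uu_nonneg hυ a p μ n z))]
      have hz1 : |z - x| < 1 := by rw [← Real.dist_eq]; exact Metric.mem_ball.mp hz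
      have hz' : z + μ ≤ B := by
        have h1 := abs_lt.mp hz1
        have := le_abs_self x; have := le_abs_self μ
        rw [hB]; linarith [h1.2]
      simp only [uu]
      gcongr)
    (Metric.mem_ball_self one_pos) ((summable_uu_pow hυ hc 1 x).congr (fun n => by rw [pow_one]))
    (Metric.mem_ball_self one_pos)
  exact H

theorem stmt_11 (υ a : ℝ) (hυ : 0 < υ) (ha : 1 < a) (p μ y : ℝ) (hp : 0 < p) :
    Summable (fun q : ℕ × ℕ =>
      (υ ^ (q.1 + q.2) / ((Nat.factorial q.1 : ℝ) * (Nat.factorial q.2 : ℝ))) *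
        ((q.1 : ℝ) - (q.2 : ℝ)) ^ 2 *
        Real.exp ((y + μ) * ((q.1 : ℝ) + (q.2 : ℝ)) -
          (a * p / 2) * ((q.1 : ℝ) ^ 2 + (q.2 : ℝ) ^ 2))) ∧
    HasDerivAt (fun y' => deriv (fun y'' => E υ a y'' p μ) y')
      (-1 / p + (1 / (2 * (K υ a y p μ) ^ 2)) *
        ∑' q : ℕ × ℕ,
          (υ ^ (q.1 + q.2) / ((Nat.factorial q.1 : ℝ) * (Nat.factorial q.2 : ℝ))) *
            ((q.1 : ℝ) - (q.2 : ℝ)) ^ 2 *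
            Real.exp ((y + μ) * ((q.1 : ℝ) + (q.2 : ℝ)) -
              (a * p / 2) * ((q.1 : ℝ) ^ 2 + (q.2 : ℝ) ^ 2))) y := by
  have ha0 : (0:ℝ) < a := lt_trans one_pos ha
  have hc : 0 < a * p / 2 := by positivity
  -- pointwise decomposition of the double-series term
  have hterm : ∀ q : ℕ × ℕ,
      (υ ^ (q.1 + q.2) / ((Nat.factorial q.1 : ℝ) * (Nat.factorial q.2 : ℝ))) *
        ((q.1 : ℝ) - (q.2 : ℝ)) ^ 2 *
        Real.exp ((y + μ) * ((q.1 : ℝ) + (q.2 : ℝ)) -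
          (a * p / 2) * ((q.1 : ℝ) ^ 2 + (q.2 : ℝ) ^ 2))
      = ((q.1 : ℝ) ^ 2 * uu υ a p μ q.1 y) * uu υ a p μ q.2 y
        - 2 * (((q.1 : ℝ) * uu υ a p μ q.1 y) * ((q.2 : ℝ) * uu υ a p μ q.2 y))
        + uu υ a p μ q.1 y * ((q.2 : ℝ) ^ 2 * uu υ a p μ q.2 y) := by
    intro q
    have hexp : Real.exp ((y + μ) * ((q.1 : ℝ) + (q.2 : ℝ)) -
          (a * p / 2) * ((q.1 : ℝ) ^ 2 + (q.2 : ℝ) ^ 2))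
        = Real.exp ((y + μ) * q.1 - (a * p / 2) * (q.1 : ℝ) ^ 2) *
          Real.exp ((y + μ) * q.2 - (a * p / 2) * (q.2 : ℝ) ^ 2) := by
      rw [← Real.exp_add]; ring_nf
    unfold uu
    rw [hexp, pow_add]
    have h1 : (Nat.factorial q.1 : ℝ) ≠ 0 := by exact_mod_cast Nat.factorial_ne_zero q.1
    have h2 : (Nat.factorial q.2 : ℝ) ≠ 0 := by exact_mod_cast Nat.factorial_ne_zero q.2
    field_simp
    ring
  -- summability of each product family
  have SA : Summable (fun q : ℕ × ℕ =>
      ((q.1 : ℝ) ^ 2 * uu υ a p μ q.1 y) * uu υ a p μ q.2 y) :=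
    (summable_uu_pow hυ hc 2 y).mul_of_nonneg (summable_uu hυ hc y)
      (fun n => mul_nonneg (by positivity) (uu_nonneg hυ a p μ n y))
      (fun n => uu_nonneg hυ a p μ n y)
  have SB : Summable (fun q : ℕ × ℕ =>
      ((q.1 : ℝ) * uu υ a p μ q.1 y) * ((q.2 : ℝ) * uu υ a p μ q.2 y)) :=
    ((summable_uu_pow hυ hc 1 y).congr (fun n => by rw [pow_one])).mul_of_nonneg
      ((summable_uu_pow hυ hc 1 y).congr (fun n => by rw [pow_one]))
      (fun n => mul_nonneg (Nat.cast_nonneg n) (uu_nonneg hυ a p μ n y))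
      (fun n => mul_nonneg (Nat.cast_nonneg n) (uu_nonneg hυ a p μ n y))
  have SC : Summable (fun q : ℕ × ℕ =>
      uu υ a p μ q.1 y * ((q.2 : ℝ) ^ 2 * uu υ a p μ q.2 y)) :=
    (summable_uu hυ hc y).mul_of_nonneg (summable_uu_pow hυ hc 2 y)
      (fun n => uu_nonneg hυ a p μ n y)
      (fun n => mul_nonneg (by positivity) (uu_nonneg hυ a p μ n y))
  have Ssum : Summable (fun q : ℕ × ℕ =>
      (υ ^ (q.1 + q.2) / ((Nat.factorial q.1 : ℝ) * (Nat.factorial q.2 : ℝ))) *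
        ((q.1 : ℝ) - (q.2 : ℝ)) ^ 2 *
        Real.exp ((y + μ) * ((q.1 : ℝ) + (q.2 : ℝ)) -
          (a * p / 2) * ((q.1 : ℝ) ^ 2 + (q.2 : ℝ) ^ 2))) :=
    (((SA.sub (SB.mul_left 2)).add SC).congr (fun q => (hterm q).symm))
  refine ⟨Ssum, ?_⟩
  -- value of the double sum
  have habsA : Summable (fun n : ℕ => ‖(n : ℝ) ^ 2 * uu υ a p μ n y‖) :=
    (summable_uu_pow hυ hc 2 y).congr fun n =>
      ((Real.norm_eq_abs _).trans (abs_of_nonneg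
        (mul_nonneg (by positivity) (uu_nonneg hυ a p μ n y)))).symm
  have habs0 : Summable (fun n : ℕ => ‖uu υ a p μ n y‖) :=
    (summable_uu hυ hc y).congr fun n =>
      ((Real.norm_eq_abs _).trans (abs_of_nonneg (uu_nonneg hυ a p μ n y))).symm
  have habs1 : Summable (fun n : ℕ => ‖(n : ℝ) * uu υ a p μ n y‖) :=
    ((summable_uu_pow hυ hc 1 y).congr (fun n => by rw [pow_one])).congr fun n =>
      ((Real.norm_eq_abs _).trans (abs_of_nonneg
        (mul_nonneg (Nat.cast_nonneg n) (uu_nonneg hυ a p μ n y)))).symm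
  have hKv : K υ a y p μ = ∑' n : ℕ, uu υ a p μ n y := rfl
  have hS : (∑' q : ℕ × ℕ,
      (υ ^ (q.1 + q.2) / ((Nat.factorial q.1 : ℝ) * (Nat.factorial q.2 : ℝ))) *
        ((q.1 : ℝ) - (q.2 : ℝ)) ^ 2 *
        Real.exp ((y + μ) * ((q.1 : ℝ) + (q.2 : ℝ)) -
          (a * p / 2) * ((q.1 : ℝ) ^ 2 + (q.2 : ℝ) ^ 2)))
      = 2 * (K2 υ a p μ y * K υ a y p μ - K1 υ a p μ y ^ 2) := by
    rw [tsum_congr hterm, Summable.tsum_add (SA.sub (SB.mul_left 2)) SC,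
      Summable.tsum_sub SA (SB.mul_left 2), tsum_mul_left,
      ← tsum_mul_tsum_of_summable_norm habsA habs0,
      ← tsum_mul_tsum_of_summable_norm habs1 habs1,
      ← tsum_mul_tsum_of_summable_norm habs0 habsA]
    rw [hKv]
    unfold K1 K2
    ring
  -- derivative of E
  have hKpos : ∀ x : ℝ, 0 < K υ a x p μ := fun x => K_pos hυ hc x
  have hE : ∀ x : ℝ, HasDerivAt (fun z => E υ a z p μ)
      (-x / p + K1 υ a p μ x / K υ a x p μ) x := by
    intro x
    have h1 : HasDerivAt (fun z : ℝ => -(z ^ 2) / (2 * p)) (-x / p) x := by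
      have := ((hasDerivAt_pow 2 x).neg).div_const (2 * p)
      refine this.congr_deriv ?_
      field_simp
      ring
    have h2 : HasDerivAt (fun z => Real.log (K υ a z p μ))
        (K1 υ a p μ x / K υ a x p μ) x :=
      (hasDerivAt_K hυ hc x).log (ne_of_gt (hKpos x))
    exact h1.add h2
  have hderiv : (fun y' => deriv (fun y'' => E υ a y'' p μ) y')
      = fun x => -x / p + K1 υ a p μ x / K υ a x p μ :=
    funext fun x => (hE x).deriv
  rw [hderiv]
  have hd1 : HasDerivAt (fun x : ℝ => -x / p) (-1 / p) y :=
    (hasDerivAt_id y).neg.div_const p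
  have hd2 : HasDerivAt (fun x => K1 υ a p μ x / K υ a x p μ)
      ((K2 υ a p μ y * K υ a y p μ - K1 υ a p μ y * K1 υ a p μ y) / (K υ a y p μ) ^ 2) y :=
    (hasDerivAt_K1 hυ hc y).div (hasDerivAt_K hυ hc y) (ne_of_gt (hKpos y))
  have := hd1.add hd2
  refine this.congr_deriv ?_
  rw [hS]
  have hK0 : K υ a y p μ ≠ 0 := ne_of_gt (hKpos y)
  field_simp
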